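/- Let λ ∈ (0,1)^d be distinct and α ∈ ℝ_{>0}^d with Σ_{i=1}^d α_i/λ_i < 1. Then all d roots of the polynomial r(x) = Π_{i=1}^d(1 − λ_i x) + x·Σ_{i=1}^d α_i Π_{j≠i}(1 − λ_j x) are real and lie in the open interval (1, ∞). -/

import Mathlib

open Finset Polynomial Filter

lemma sign_prod {ι : Type*} [DecidableEq ι] (s : Finset ι) (f : ι → ℝ)
    (h : ∀ j ∈ s, f j ≠ 0) :
    0 < (-1:ℝ)^((s.filter (fun j => f j < 0)).card) * ∏ j ∈ s, f j := by
  classical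
  induction s using Finset.induction_on with
  | empty => simp
  | @insert a s ha ih =>
    rw [Finset.filter_insert, Finset.prod_insert ha]
    have hfa := h a (mem_insert_self a s)
    have ih' := ih (fun j hj => h j (mem_insert_of_mem hj))
    by_cases hneg : f a < 0
    · rw [if_pos hneg, Finset.card_insert_of_notMem (by simp [ha]), pow_succ]
      nlinarith
    · have hpos : 0 < f a := lt_of_le_of_ne (not_lt.1 hneg) (Ne.symm hfa)
      rw [if_neg hneg]
      nlinarith

lemma exists_root_Ioo (r : Polynomial ℝ) {a b : ℝ} (hab : a < b)
    (h : eval a r * eval b r < 0) : ∃ x ∈ Set.Ioo a b, eval x r = 0 := by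
  have hc : ContinuousOn (fun x => eval x r) (Set.Icc a b) := (r.continuous).continuousOn
  rcases mul_neg_iff.1 h with ⟨ha, hb⟩ | ⟨ha, hb⟩
  · obtain ⟨x, hx, hx0⟩ := intermediate_value_Ioo' hab.le hc (Set.mem_Ioo.2 ⟨hb, ha⟩)
    exact ⟨x, hx, hx0⟩
  · obtain ⟨x, hx, hx0⟩ := intermediate_value_Ioo hab.le hc (Set.mem_Ioo.2 ⟨ha, hb⟩)
    exact ⟨x, hx, hx0⟩

lemma opp_sign {u v : ℝ} {e : ℕ} (h1 : 0 < (-1:ℝ)^e * u) (h2 : 0 < (-1:ℝ)^(e+1) * v) :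
    u * v < 0 := by
  rcases Nat.even_or_odd e with he | ho
  · rw [he.neg_one_pow, one_mul] at h1
    rw [pow_succ, he.neg_one_pow, one_mul] at h2
    nlinarith
  · rw [ho.neg_one_pow] at h1
    rw [pow_succ, ho.neg_one_pow] at h2
    nlinarith

lemma key_sorted (d : ℕ) (hd : 0 < d) (α lam : Fin d → ℝ)
    (hlam : ∀ i, lam i ∈ Set.Ioo (0 : ℝ) 1)
    (hmono : StrictMono lam)
    (halpha : ∀ i, 0 < α i)
    (hsum : ∑ i, α i / lam i < 1)
    (r : Polynomial ℝ)
    (hr : r = ∏ i, (1 - C (lam i) * X) +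
      X * ∑ i, C (α i) * ∏ j ∈ Finset.univ.erase i, (1 - C (lam j) * X)) :
    (r.roots).card = d ∧ ∀ x ∈ r.roots, 1 < x := by
  classical
  have hlam0 : ∀ i, 0 < lam i := fun i => (hlam i).1
  have hlam1 : ∀ i, lam i < 1 := fun i => (hlam i).2
  set μ : Fin d → ℝ := fun i => (lam i)⁻¹ with hμdef
  have hμ1 : ∀ i, 1 < μ i := fun i => (one_lt_inv₀ (hlam0 i)).2 (hlam1 i)
  have hμanti : StrictAnti μ := fun i j hij => inv_strictAnti₀ (hlam0 i) (hmono hij)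
  have heval : ∀ x : ℝ, eval x r =
      ∏ i, (1 - lam i * x) + x * ∑ i, α i * ∏ j ∈ Finset.univ.erase i, (1 - lam j * x) := by
    intro x
    simp [hr, eval_prod, eval_finset_sum]
  -- sign at the points μ k
  have hE : ∀ k : Fin d, 0 < (-1:ℝ)^(d - 1 - (k:ℕ)) * eval (μ k) r := by
    intro k
    have hPk : 1 - lam k * μ k = 0 := by
      simp only [hμdef]
      rw [mul_inv_cancel₀ (hlam0 k).ne', sub_self]
    have hprod0 : ∏ i, (1 - lam i * μ k) = 0 :=
      Finset.prod_eq_zero (mem_univ k) hPk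
    have hsum0 : ∑ i, α i * ∏ j ∈ Finset.univ.erase i, (1 - lam j * μ k)
        = α k * ∏ j ∈ Finset.univ.erase k, (1 - lam j * μ k) := by
      apply Finset.sum_eq_single
      · intro i _ hik
        have h0 : ∏ j ∈ Finset.univ.erase i, (1 - lam j * μ k) = 0 :=
          Finset.prod_eq_zero (Finset.mem_erase.2 ⟨Ne.symm hik, mem_univ k⟩) hPk
        simp [h0]
      · intro h; exact absurd (mem_univ k) h
    have hiff : ∀ j : Fin d, (1 - lam j * μ k < 0 ↔ k < j) := by
      intro j
      rw [sub_neg, hμdef]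
      rw [← div_eq_mul_inv, lt_div_iff₀ (hlam0 k), one_mul]
      exact hmono.lt_iff_lt
    have hne : ∀ j ∈ Finset.univ.erase k, (1 - lam j * μ k) ≠ 0 := by
      intro j hj h0
      have hjk : j ≠ k := (Finset.mem_erase.1 hj).1
      apply hjk
      apply hmono.injective
      have h1 : lam j * (lam k)⁻¹ = 1 := by
        simp only [hμdef] at h0
        linarith
      rw [mul_inv_eq_one₀ (hlam0 k).ne'] at h1
      exact h1
    have hfilter : (Finset.univ.erase k).filter (fun j => 1 - lam j * μ k < 0) = Finset.Ioi k := by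
      ext j
      simp only [Finset.mem_filter, Finset.mem_erase, Finset.mem_Ioi, Finset.mem_univ, true_and,
        and_true, hiff j]
      exact ⟨fun h => h.2, fun h => ⟨h.ne', h⟩⟩
    have hsign := sign_prod (Finset.univ.erase k) (fun j => 1 - lam j * μ k) hne
    rw [hfilter, Fin.card_Ioi] at hsign
    have hμpos : 0 < μ k := inv_pos.2 (hlam0 k)
    have heq : eval (μ k) r = μ k * (α k * ∏ j ∈ Finset.univ.erase k, (1 - lam j * μ k)) := by
      rw [heval, hprod0, hsum0, zero_add]
    rw [heq]
    have hh := mul_pos (mul_pos hμpos (halpha k)) hsign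
    calc (0:ℝ) < (μ k * α k) * ((-1)^(d-1-(k:ℕ)) * ∏ j ∈ Finset.univ.erase k, (1 - lam j * μ k)) := hh
      _ = (-1)^(d-1-(k:ℕ)) * (μ k * (α k * ∏ j ∈ Finset.univ.erase k, (1 - lam j * μ k))) := by
        ring
  -- behaviour at +∞ : find M beyond μ ⟨0,hd⟩ with sign (-1)^d
  have hterm : ∀ i, Tendsto (fun M : ℝ => M / (1 - lam i * M)) atTop (nhds (-(lam i)⁻¹)) := by
    intro i
    have h1 : Tendsto (fun M : ℝ => (M⁻¹ - lam i)⁻¹) atTop (nhds (0 - lam i)⁻¹) :=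
      (tendsto_inv_atTop_zero.sub tendsto_const_nhds).inv₀
        (by simpa using (hlam0 i).ne')
    rw [zero_sub, inv_neg] at h1
    refine h1.congr' ?_
    filter_upwards [eventually_gt_atTop (0:ℝ)] with M hM
    have h2 : M⁻¹ - lam i = (1 - lam i * M) / M := by
      field_simp
    rw [h2, inv_div]
  have hlim2 : Tendsto (fun M : ℝ => ∑ i, α i * (M / (1 - lam i * M))) atTop
      (nhds (∑ i, α i * (-(lam i)⁻¹))) :=
    tendsto_finset_sum _ (fun i _ => ((hterm i).const_mul (α i)))
  have hsum_eq : (∑ i, α i * (-(lam i)⁻¹)) = -(∑ i, α i / lam i) := by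
    rw [← Finset.sum_neg_distrib]
    exact Finset.sum_congr rfl (fun i _ => by rw [div_eq_mul_inv]; ring)
  rw [hsum_eq] at hlim2
  have hglim : Tendsto (fun M : ℝ => 1 + ∑ i, α i * (M / (1 - lam i * M))) atTop
      (nhds (1 + -(∑ i, α i / lam i))) := tendsto_const_nhds.add hlim2
  have hgpos : ∀ᶠ M : ℝ in atTop, 0 < 1 + ∑ i, α i * (M / (1 - lam i * M)) :=
    hglim.eventually (eventually_gt_nhds (by linarith))
  have hneg : ∀ᶠ M : ℝ in atTop, ∀ i, 1 - lam i * M < 0 := by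
    rw [Filter.eventually_all]
    intro i
    filter_upwards [eventually_gt_atTop ((lam i)⁻¹)] with M hM
    have h1 := mul_lt_mul_of_pos_left hM (hlam0 i)
    rw [mul_inv_cancel₀ (hlam0 i).ne'] at h1
    linarith
  obtain ⟨M, hM0, hMneg, hMg⟩ :=
    ((eventually_gt_atTop (μ ⟨0, hd⟩)).and (hneg.and hgpos)).exists
  have hfac : eval M r = (∏ i, (1 - lam i * M)) * (1 + ∑ i, α i * (M / (1 - lam i * M))) := by
    rw [heval, mul_add, mul_one]
    congr 1
    rw [Finset.mul_sum, Finset.mul_sum]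
    refine Finset.sum_congr rfl (fun i _ => ?_)
    rw [← Finset.prod_erase_mul univ (fun j => 1 - lam j * M) (mem_univ i)]
    have hPi : (1 - lam i * M) ≠ 0 := (hMneg i).ne
    rw [mul_div_assoc', mul_div_assoc', eq_div_iff hPi]
    ring
  have hMsign : 0 < (-1:ℝ)^d * eval M r := by
    have hsign := sign_prod univ (fun i => 1 - lam i * M) (fun j _ => (hMneg j).ne)
    rw [Finset.filter_true_of_mem (fun j _ => hMneg j), Finset.card_univ, Fintype.card_fin] at hsign
    rw [hfac]
    calc (0:ℝ) < ((-1)^d * ∏ i, (1 - lam i * M)) * (1 + ∑ i, α i * (M / (1 - lam i * M))) :=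
          mul_pos hsign hMg
      _ = (-1)^d * ((∏ i, (1 - lam i * M)) * (1 + ∑ i, α i * (M / (1 - lam i * M)))) := by ring
  -- root in each interval
  have hroot : ∀ i : Fin d, ∃ x,
      x ∈ Set.Ioo (μ i) (if h : (i:ℕ) = 0 then M
        else μ ⟨(i:ℕ) - 1, lt_of_le_of_lt (Nat.sub_le _ _) i.isLt⟩) ∧ eval x r = 0 := by
    intro i
    by_cases h0 : (i:ℕ) = 0
    · rw [dif_pos h0]
      have hieq : i = ⟨0, hd⟩ := Fin.ext h0
      rw [hieq]
      apply exists_root_Ioo r hM0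
      have h1 := hE ⟨0, hd⟩
      have h2 : 0 < (-1:ℝ)^((d - 1 - ((⟨0,hd⟩ : Fin d) : ℕ)) + 1) * eval M r := by
        have he : (d - 1 - ((⟨0,hd⟩ : Fin d) : ℕ)) + 1 = d := by simp; omega
        rw [he]; exact hMsign
      exact opp_sign h1 h2
    · rw [dif_neg h0]
      have hilt := i.isLt
      have hlt : (⟨(i:ℕ) - 1, lt_of_le_of_lt (Nat.sub_le _ _) i.isLt⟩ : Fin d) < i := by
        rw [Fin.lt_def]; simp; omega
      apply exists_root_Ioo r (hμanti hlt)
      have h2 : 0 < (-1:ℝ)^((d - 1 - (i:ℕ)) + 1) *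
          eval (μ ⟨(i:ℕ) - 1, lt_of_le_of_lt (Nat.sub_le _ _) i.isLt⟩) r := by
        have he : (d - 1 - (i:ℕ)) + 1 = d - 1 - ((i:ℕ) - 1) := by omega
        rw [he]
        exact hE ⟨(i:ℕ) - 1, lt_of_le_of_lt (Nat.sub_le _ _) i.isLt⟩
      exact opp_sign (hE i) h2
  choose y hy using hroot
  have hlow : ∀ i, μ i < y i := fun i => (hy i).1.1
  have hyanti : StrictAnti y := by
    intro i j hij
    have hj0 : (j:ℕ) ≠ 0 := by
      have : (i:ℕ) < (j:ℕ) := hij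
      omega
    have h1 : y j < μ ⟨(j:ℕ) - 1, lt_of_le_of_lt (Nat.sub_le _ _) j.isLt⟩ := by
      have := (hy j).1.2
      rw [dif_neg hj0] at this
      exact this
    have h2 : μ ⟨(j:ℕ) - 1, lt_of_le_of_lt (Nat.sub_le _ _) j.isLt⟩ ≤ μ i := by
      apply hμanti.antitone
      rw [Fin.le_def]
      simp
      have : (i:ℕ) < (j:ℕ) := hij
      omega
    linarith [hlow i]
  have hr0 : r ≠ 0 := by
    intro h
    have := hE ⟨0, hd⟩
    rw [h] at this
    simp at this
  have hlin : ∀ a : ℝ, (1 - C a * X : Polynomial ℝ).natDegree ≤ 1 := by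
    intro a
    refine le_trans (natDegree_sub_le _ _) (max_le (by simp) ?_)
    refine le_trans (natDegree_mul_le) ?_
    simp
  have hdeg : r.natDegree ≤ d := by
    rw [hr]
    refine le_trans (natDegree_add_le _ _) (max_le ?_ ?_)
    · refine le_trans (natDegree_prod_le _ _) ?_
      refine le_trans (Finset.sum_le_sum (fun i _ => hlin (lam i))) ?_
      simp
    · refine le_trans (natDegree_mul_le) ?_
      have hsd : (∑ i, C (α i) * ∏ j ∈ Finset.univ.erase i, (1 - C (lam j) * X)).natDegree
          ≤ d - 1 := by
        refine natDegree_sum_le_of_forall_le _ _ (fun i _ => ?_)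
        refine le_trans (natDegree_mul_le) ?_
        simp only [natDegree_C, zero_add]
        refine le_trans (natDegree_prod_le _ _) ?_
        refine le_trans (Finset.sum_le_sum (fun j _ => hlin (lam j))) ?_
        simp [Finset.card_erase_of_mem]
      have := natDegree_X_le (R := ℝ)
      omega
  have hmem : ∀ i, y i ∈ r.roots := fun i => (mem_roots hr0).2 ((hy i).2)
  set S : Finset ℝ := Finset.image y univ with hS
  have hScard : S.card = d := by
    rw [hS, Finset.card_image_of_injective _ hyanti.injective, Finset.card_univ, Fintype.card_fin]
  have hSsub : S ⊆ r.roots.toFinset := by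
    intro x hx
    rw [hS, Finset.mem_image] at hx
    obtain ⟨i, _, rfl⟩ := hx
    exact Multiset.mem_toFinset.2 (hmem i)
  have hcard1 : d ≤ r.roots.toFinset.card := hScard ▸ Finset.card_le_card hSsub
  have hcards : Multiset.card r.roots = d :=
    le_antisymm (le_trans (card_roots' r) hdeg)
      (le_trans hcard1 (Multiset.toFinset_card_le _))
  refine ⟨hcards, fun x hx => ?_⟩
  have hSeq : S = r.roots.toFinset :=
    Finset.eq_of_subset_of_card_le hSsub
      (by rw [hScard]; exact le_trans (Multiset.toFinset_card_le _) (le_of_eq hcards))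
  have hxS : x ∈ S := hSeq ▸ Multiset.mem_toFinset.2 hx
  rw [hS, Finset.mem_image] at hxS
  obtain ⟨i, _, rfl⟩ := hxS
  linarith [hμ1 i, hlow i]


/-- If `∑ᵢ αᵢ/λᵢ < 1`, all `d` roots of
`r(x) = ∏ᵢ(1 − λᵢx) + x·∑ᵢ αᵢ ∏_{j≠i}(1 − λⱼx)` are real and lie in `(1, ∞)`. -/
theorem r_roots_gt_one (d : ℕ) (α lam : Fin d → ℝ)
    (hlam : ∀ i, lam i ∈ Set.Ioo (0 : ℝ) 1)
    (hdist : Function.Injective lam)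
    (halpha : ∀ i, 0 < α i)
    (hsum : ∑ i, α i / lam i < 1)
    (r : Polynomial ℝ)
    (hr : r = ∏ i, (1 - C (lam i) * X) +
      X * ∑ i, C (α i) * ∏ j ∈ Finset.univ.erase i, (1 - C (lam j) * X)) :
    (r.roots).card = d ∧ ∀ x ∈ r.roots, 1 < x := by
    classical
  rcases Nat.eq_zero_or_pos d with hd | hd
  · subst hd
    have hr1 : r = 1 := by
      simpa using hr
    rw [hr1]
    simp
  · set σ : Equiv.Perm (Fin d) := Tuple.sort lam with hσ
    have hinj : Function.Injective (lam ∘ σ) := hdist.comp σ.injective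
    have hmono : StrictMono (lam ∘ σ) :=
      (Tuple.monotone_sort lam).strictMono_of_injective hinj
    have hprod_erase : ∀ i : Fin d,
        (∏ j ∈ Finset.univ.erase i, (1 - C (lam (σ j)) * X)) =
          ∏ j ∈ Finset.univ.erase (σ i), (1 - C (lam j) * X) := by
      intro i
      refine Finset.prod_bij (fun j _ => σ j) ?_ ?_ ?_ ?_
      · intro j hj
        rw [Finset.mem_erase] at hj ⊢
        exact ⟨fun h => hj.1 (σ.injective h), Finset.mem_univ _⟩
      · intro a _ b _ h
        exact σ.injective h
      · intro b hb
        refine ⟨σ.symm b, ?_, by simp⟩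
        rw [Finset.mem_erase] at hb ⊢
        refine ⟨fun h => hb.1 ?_, Finset.mem_univ _⟩
        rw [← h]
        simp
      · intro j _
        rfl
    have hr' : r = ∏ i, (1 - C ((lam ∘ σ) i) * X) +
        X * ∑ i, C ((α ∘ σ) i) * ∏ j ∈ Finset.univ.erase i, (1 - C ((lam ∘ σ) j) * X) := by
      rw [hr]
      congr 1
      · exact (Equiv.prod_comp σ fun i => 1 - C (lam i) * X).symm
      · congr 1
        rw [show (∑ i, C ((α ∘ σ) i) * ∏ j ∈ Finset.univ.erase i, (1 - C ((lam ∘ σ) j) * X))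
            = ∑ i, C (α (σ i)) * ∏ j ∈ Finset.univ.erase (σ i), (1 - C (lam j) * X) from
          Finset.sum_congr rfl (fun i _ => by
            simp only [Function.comp_apply]
            rw [hprod_erase i])]
        exact (Equiv.sum_comp σ fun i => C (α i) * ∏ j ∈ Finset.univ.erase i,
          (1 - C (lam j) * X)).symm
    have hsum' : ∑ i, (α ∘ σ) i / (lam ∘ σ) i < 1 := by
      rw [show (∑ i, (α ∘ σ) i / (lam ∘ σ) i) = ∑ i, α i / lam i from
        Equiv.sum_comp σ fun i => α i / lam i]
      exact hsum
    exact key_sorted d hd (α ∘ σ) (lam ∘ σ) (fun i => hlam _) hmono (fun i => halpha _)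
      hsum' r hr'
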